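/- Let ω > 0, T = 2π/ω, and let A be an m×m complex matrix with filtered propagator S_A := (2/T) ∫₀^T (cos(ωt) − 1/4)·exp(tA) dt. Then every eigenvalue of S_A is of the form β(λ) for some eigenvalue λ of A; that is, the spectrum of S_A is contained in the image of the spectrum of A under the filter-transfer function β. -/

import Mathlib

open Complex intervalIntegral

/-- The filter-transfer function
`β(λ) = (2/T) ∫₀^T (cos(ωt) − 1/4) e^{λt} dt` with `T = 2π/ω`. -/
noncomputable def filterBeta (ω : ℝ) (lam : ℂ) : ℂ :=
  (2 / ((2 * Real.pi / ω : ℝ) : ℂ)) *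
    ∫ t in (0:ℝ)..(2 * Real.pi / ω), ((Real.cos (ω * t) : ℂ) - 1/4) * Complex.exp (lam * t)

/-- The filtered propagator `S_A = (2/T) ∫₀^T (cos(ωt) − 1/4) exp(tA) dt`, the integral
taken entrywise, with `T = 2π/ω`. -/
noncomputable def filteredPropagator {m : ℕ} (ω : ℝ) (A : Matrix (Fin m) (Fin m) ℂ) :
    Matrix (Fin m) (Fin m) ℂ :=
  Matrix.of fun i j =>
    (2 / ((2 * Real.pi / ω : ℝ) : ℂ)) *
      ∫ t in (0:ℝ)..(2 * Real.pi / ω),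
        ((Real.cos (ω * t) : ℂ) - 1/4) * (NormedSpace.exp ((t : ℂ) • A) i j)

namespace FilterAux

open NormedSpace MeasureTheory

variable {m : ℕ}

/-- The propagator `exp (t • A)` as a function of `t : ℝ`. -/
noncomputable def Φ (A : Matrix (Fin m) (Fin m) ℂ) (t : ℝ) : Matrix (Fin m) (Fin m) ℂ :=
  NormedSpace.exp ((t : ℂ) • A)

lemma continuous_Φ (A : Matrix (Fin m) (Fin m) ℂ) : Continuous (Φ A) := by
  letI : SeminormedRing (Matrix (Fin m) (Fin m) ℂ) := Matrix.linftyOpSemiNormedRing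
  letI : NormedRing (Matrix (Fin m) (Fin m) ℂ) := Matrix.linftyOpNormedRing
  letI : NormedAlgebra ℂ (Matrix (Fin m) (Fin m) ℂ) := Matrix.linftyOpNormedAlgebra
  have h : Continuous fun z : ℂ => NormedSpace.exp (z • A) := by
    have hd : Differentiable ℂ fun z : ℂ => NormedSpace.exp (z • A) := fun z =>
      (hasDerivAt_exp_smul_const A z).differentiableAt
    exact hd.continuous
  exact h.comp Complex.continuous_ofReal

/-- `mulVec` by a fixed vector, as a continuous linear map in the matrix. -/
noncomputable def mulVecCLM (v : Fin m → ℂ) :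
    Matrix (Fin m) (Fin m) ℂ →L[ℂ] (Fin m → ℂ) where
  toFun M := M.mulVec v
  map_add' M N := Matrix.add_mulVec M N v
  map_smul' c M := Matrix.smul_mulVec c M v
  cont := continuous_id.matrix_mulVec continuous_const

@[simp] lemma mulVecCLM_apply (v : Fin m → ℂ) (M : Matrix (Fin m) (Fin m) ℂ) :
    mulVecCLM v M = M.mulVec v := rfl

lemma exp_smul_mulVec (A : Matrix (Fin m) (Fin m) ℂ) {v : Fin m → ℂ} {μ : ℂ}
    (hv : A.mulVec v = μ • v) (z : ℂ) :
    (NormedSpace.exp (z • A)).mulVec v = Complex.exp (μ * z) • v := by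
  letI : SeminormedRing (Matrix (Fin m) (Fin m) ℂ) := Matrix.linftyOpSemiNormedRing
  letI : NormedRing (Matrix (Fin m) (Fin m) ℂ) := Matrix.linftyOpNormedRing
  letI : NormedAlgebra ℂ (Matrix (Fin m) (Fin m) ℂ) := Matrix.linftyOpNormedAlgebra
  have hpow : ∀ n : ℕ, ((z • A) ^ n).mulVec v = (μ * z) ^ n • v := by
    intro n
    induction n with
    | zero => simp
    | succ n ih =>
      have h1 : (z • A).mulVec v = (μ * z) • v := by
        rw [Matrix.smul_mulVec, hv, smul_smul, mul_comm]
      rw [pow_succ, ← Matrix.mulVec_mulVec, h1, Matrix.mulVec_smul, ih, smul_smul, ← pow_succ']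
  have hsum : Summable fun n : ℕ => ((n.factorial : ℂ)⁻¹) • (z • A) ^ n :=
    NormedSpace.expSeries_summable' (z • A)
  have hsum2 : Summable fun n : ℕ => ((n.factorial : ℂ)⁻¹) * (μ * z) ^ n := by
    simpa [smul_eq_mul] using NormedSpace.expSeries_summable' (𝕂 := ℂ) (μ * z)
  calc (NormedSpace.exp (z • A)).mulVec v
      = mulVecCLM v (∑' n : ℕ, ((n.factorial : ℂ)⁻¹) • (z • A) ^ n) := by
        rw [NormedSpace.exp_eq_tsum (𝕂 := ℂ)]
        rfl
    _ = ∑' n : ℕ, mulVecCLM v (((n.factorial : ℂ)⁻¹) • (z • A) ^ n) :=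
        (mulVecCLM v).map_tsum hsum
    _ = ∑' n : ℕ, (((n.factorial : ℂ)⁻¹) * (μ * z) ^ n) • v := by
        refine tsum_congr fun n => ?_
        rw [_root_.map_smul, mulVecCLM_apply, hpow, smul_smul]
    _ = (∑' n : ℕ, ((n.factorial : ℂ)⁻¹) * (μ * z) ^ n) • v := hsum2.tsum_smul_const v
    _ = Complex.exp (μ * z) • v := by
        rw [Complex.exp_eq_exp_ℂ, NormedSpace.exp_eq_tsum (𝕂 := ℂ)]
        simp [smul_eq_mul]

lemma continuous_Φ_mulVec (A : Matrix (Fin m) (Fin m) ℂ) (u : Fin m → ℂ) (i : Fin m) :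
    Continuous fun t : ℝ => (Φ A t).mulVec u i :=
  (continuous_apply i).comp ((continuous_Φ A).matrix_mulVec continuous_const)

lemma continuous_cosfactor (ω : ℝ) :
    Continuous fun t : ℝ => ((Real.cos (ω * t) : ℂ) - 1/4) :=
  ((Complex.continuous_ofReal.comp
      (Real.continuous_cos.comp (continuous_const.mul continuous_id))).sub continuous_const)

/-- Key formula: `mulVec` of the filtered propagator, componentwise. -/
lemma filteredPropagator_mulVec_apply (ω : ℝ) (A : Matrix (Fin m) (Fin m) ℂ)
    (u : Fin m → ℂ) (i : Fin m) :
    (filteredPropagator ω A).mulVec u i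
      = (2 / ((2 * Real.pi / ω : ℝ) : ℂ)) *
        ∫ t in (0:ℝ)..(2 * Real.pi / ω),
          ((Real.cos (ω * t) : ℂ) - 1/4) * ((Φ A t).mulVec u i) := by
  have hΦc : ∀ j : Fin m, Continuous fun t : ℝ => Φ A t i j := fun j =>
    ((continuous_Φ A).matrix_elem i j)
  have hint : ∀ j : Fin m,
      IntervalIntegrable
        (fun t : ℝ => (((Real.cos (ω * t) : ℂ) - 1/4) * Φ A t i j) * u j)
        volume 0 (2 * Real.pi / ω) :=
    fun j => (((continuous_cosfactor ω).mul (hΦc j)).mul continuous_const).intervalIntegrable _ _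
  have lhs : (filteredPropagator ω A).mulVec u i
      = ∑ j : Fin m, ((2 / ((2 * Real.pi / ω : ℝ) : ℂ)) *
          ∫ t in (0:ℝ)..(2 * Real.pi / ω),
            ((Real.cos (ω * t) : ℂ) - 1/4) * Φ A t i j) * u j := rfl
  rw [lhs]
  calc
    ∑ j : Fin m, ((2 / ((2 * Real.pi / ω : ℝ) : ℂ)) *
        ∫ t in (0:ℝ)..(2 * Real.pi / ω), ((Real.cos (ω * t) : ℂ) - 1/4) * Φ A t i j) * u j
      = (2 / ((2 * Real.pi / ω : ℝ) : ℂ)) *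
        ∑ j : Fin m, ∫ t in (0:ℝ)..(2 * Real.pi / ω),
            (((Real.cos (ω * t) : ℂ) - 1/4) * Φ A t i j) * u j := by
        rw [Finset.mul_sum]
        refine Finset.sum_congr rfl fun j _ => ?_
        rw [mul_assoc, intervalIntegral.integral_mul_const]
    _ = (2 / ((2 * Real.pi / ω : ℝ) : ℂ)) *
        ∫ t in (0:ℝ)..(2 * Real.pi / ω),
          ∑ j : Fin m, (((Real.cos (ω * t) : ℂ) - 1/4) * Φ A t i j) * u j := by
        rw [intervalIntegral.integral_finset_sum]
        exact fun j _ => hint j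
    _ = (2 / ((2 * Real.pi / ω : ℝ) : ℂ)) *
        ∫ t in (0:ℝ)..(2 * Real.pi / ω),
          ((Real.cos (ω * t) : ℂ) - 1/4) * ((Φ A t).mulVec u i) := by
        congr 1
        refine intervalIntegral.integral_congr fun t _ => ?_
        have h2 : (Φ A t).mulVec u i = ∑ j : Fin m, Φ A t i j * u j := rfl
        rw [h2, Finset.mul_sum]
        exact Finset.sum_congr rfl fun j _ => by ring

/-- If `v` is an eigenvector of `A` with eigenvalue `μ`, then it is an eigenvector of the
filtered propagator with eigenvalue `filterBeta ω μ`. -/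
lemma filteredPropagator_mulVec (ω : ℝ) (A : Matrix (Fin m) (Fin m) ℂ)
    {v : Fin m → ℂ} {μ : ℂ} (hv : A.mulVec v = μ • v) :
    (filteredPropagator ω A).mulVec v = filterBeta ω μ • v := by
  funext i
  rw [filteredPropagator_mulVec_apply]
  have key : ∀ t : ℝ, (Φ A t).mulVec v i = Complex.exp (μ * t) * v i := by
    intro t
    rw [Φ, exp_smul_mulVec A hv]
    simp
  calc
    (2 / ((2 * Real.pi / ω : ℝ) : ℂ)) *
        ∫ t in (0:ℝ)..(2 * Real.pi / ω),
          ((Real.cos (ω * t) : ℂ) - 1/4) * ((Φ A t).mulVec v i)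
      = (2 / ((2 * Real.pi / ω : ℝ) : ℂ)) *
        ∫ t in (0:ℝ)..(2 * Real.pi / ω),
          (((Real.cos (ω * t) : ℂ) - 1/4) * Complex.exp (μ * t)) * v i := by
        congr 1
        refine intervalIntegral.integral_congr fun t _ => ?_
        rw [key t, mul_assoc]
    _ = (2 / ((2 * Real.pi / ω : ℝ) : ℂ)) *
        ((∫ t in (0:ℝ)..(2 * Real.pi / ω),
          ((Real.cos (ω * t) : ℂ) - 1/4) * Complex.exp (μ * t)) * v i) := by
        rw [intervalIntegral.integral_mul_const]
    _ = (filterBeta ω μ • v) i := by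
        simp only [Pi.smul_apply, smul_eq_mul, filterBeta]
        ring

/-- The filtered propagator commutes with `A` (in `mulVec` form). -/
lemma mulVec_comm (ω : ℝ) (A : Matrix (Fin m) (Fin m) ℂ) (u : Fin m → ℂ) :
    (filteredPropagator ω A).mulVec (A.mulVec u)
      = A.mulVec ((filteredPropagator ω A).mulVec u) := by
  have hcomm : ∀ t : ℝ, A * Φ A t = Φ A t * A := by
    intro t
    exact (((Commute.refl A).smul_right ((t : ℂ))).exp_right)
  have hswap : ∀ t : ℝ, (Φ A t).mulVec (A.mulVec u) = A.mulVec ((Φ A t).mulVec u) := by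
    intro t
    rw [Matrix.mulVec_mulVec, Matrix.mulVec_mulVec, hcomm t]
  funext i
  have hint : ∀ j : Fin m,
      IntervalIntegrable
        (fun t : ℝ => A i j * (((Real.cos (ω * t) : ℂ) - 1/4) * (Φ A t).mulVec u j))
        volume 0 (2 * Real.pi / ω) :=
    fun j => (continuous_const.mul
      ((continuous_cosfactor ω).mul (continuous_Φ_mulVec A u j))).intervalIntegrable _ _
  have rhs : A.mulVec ((filteredPropagator ω A).mulVec u) i
      = (2 / ((2 * Real.pi / ω : ℝ) : ℂ)) *
        ∫ t in (0:ℝ)..(2 * Real.pi / ω),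
          ((Real.cos (ω * t) : ℂ) - 1/4) * (A.mulVec ((Φ A t).mulVec u) i) := by
    have h1 : A.mulVec ((filteredPropagator ω A).mulVec u) i
        = ∑ j : Fin m, A i j * ((2 / ((2 * Real.pi / ω : ℝ) : ℂ)) *
            ∫ t in (0:ℝ)..(2 * Real.pi / ω),
              ((Real.cos (ω * t) : ℂ) - 1/4) * ((Φ A t).mulVec u j)) := by
      have hw : (filteredPropagator ω A).mulVec u = fun j =>
          (2 / ((2 * Real.pi / ω : ℝ) : ℂ)) *
            ∫ t in (0:ℝ)..(2 * Real.pi / ω),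
              ((Real.cos (ω * t) : ℂ) - 1/4) * ((Φ A t).mulVec u j) :=
        funext fun j => filteredPropagator_mulVec_apply ω A u j
      rw [hw]
      rfl
    rw [h1]
    calc
      ∑ j : Fin m, A i j * ((2 / ((2 * Real.pi / ω : ℝ) : ℂ)) *
          ∫ t in (0:ℝ)..(2 * Real.pi / ω),
            ((Real.cos (ω * t) : ℂ) - 1/4) * ((Φ A t).mulVec u j))
        = (2 / ((2 * Real.pi / ω : ℝ) : ℂ)) *
          ∑ j : Fin m, ∫ t in (0:ℝ)..(2 * Real.pi / ω),
              A i j * (((Real.cos (ω * t) : ℂ) - 1/4) * ((Φ A t).mulVec u j)) := by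
          rw [Finset.mul_sum]
          refine Finset.sum_congr rfl fun j _ => ?_
          rw [intervalIntegral.integral_const_mul]
          ring
      _ = (2 / ((2 * Real.pi / ω : ℝ) : ℂ)) *
          ∫ t in (0:ℝ)..(2 * Real.pi / ω),
            ∑ j : Fin m, A i j * (((Real.cos (ω * t) : ℂ) - 1/4) * ((Φ A t).mulVec u j)) := by
          rw [intervalIntegral.integral_finset_sum]
          exact fun j _ => hint j
      _ = (2 / ((2 * Real.pi / ω : ℝ) : ℂ)) *
          ∫ t in (0:ℝ)..(2 * Real.pi / ω),
            ((Real.cos (ω * t) : ℂ) - 1/4) * (A.mulVec ((Φ A t).mulVec u) i) := by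
          congr 1
          refine intervalIntegral.integral_congr fun t _ => ?_
          have h2 : A.mulVec ((Φ A t).mulVec u) i
              = ∑ j : Fin m, A i j * (Φ A t).mulVec u j := rfl
          rw [h2, Finset.mul_sum]
          exact Finset.sum_congr rfl fun j _ => by ring
  rw [filteredPropagator_mulVec_apply, rhs]
  congr 1
  refine intervalIntegral.integral_congr fun t _ => ?_
  rw [hswap t]

end FilterAux

open FilterAux in
theorem spectrum_filteredPropagator_subset {m : ℕ} (ω : ℝ) (hω : 0 < ω)
    (A : Matrix (Fin m) (Fin m) ℂ) :
    spectrum ℂ (filteredPropagator ω A) ⊆ (filterBeta ω) '' (spectrum ℂ A) := by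
  intro lam hlam
  set S := filteredPropagator ω A with hSdef
  set f : Module.End ℂ (Fin m → ℂ) := Matrix.toLinAlgEquiv' S with hfdef
  set g : Module.End ℂ (Fin m → ℂ) := Matrix.toLinAlgEquiv' A with hgdef
  have hlam' : lam ∈ spectrum ℂ f := by
    rw [hfdef, AlgEquiv.spectrum_eq]
    exact hlam
  have hfe : Module.End.HasEigenvalue f lam :=
    Module.End.HasEigenvalue.of_mem_spectrum hlam'
  set E := Module.End.eigenspace f lam with hEdef
  have hmap : ∀ x ∈ E, g x ∈ E := by
    intro x hx
    rw [hEdef, Module.End.mem_eigenspace_iff] at hx ⊢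
    have hcomm : f (g x) = g (f x) := by
      simp only [hfdef, hgdef, Matrix.toLinAlgEquiv'_apply]
      exact mulVec_comm ω A x
    rw [hcomm, hx, map_smul]
  haveI : Nontrivial E := Submodule.nontrivial_iff_ne_bot.mpr hfe
  obtain ⟨μ, hμ⟩ := Module.End.exists_eigenvalue (g.restrict hmap)
  obtain ⟨w, hw⟩ := hμ.exists_hasEigenvector
  have hw0 : (w : Fin m → ℂ) ≠ 0 := fun h => hw.2 (Subtype.ext h)
  have hgw : g (w : Fin m → ℂ) = μ • (w : Fin m → ℂ) := by
    have h1 := congrArg (Subtype.val) hw.apply_eq_smul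
    simpa [LinearMap.restrict_apply] using h1
  have hAv : A.mulVec (w : Fin m → ℂ) = μ • (w : Fin m → ℂ) := by
    rw [← Matrix.toLinAlgEquiv'_apply, ← hgdef]
    exact hgw
  have hμspec : μ ∈ spectrum ℂ A := by
    rw [← AlgEquiv.spectrum_eq (Matrix.toLinAlgEquiv') A]
    exact Module.End.hasEigenvalue_iff_mem_spectrum.mp
      (Module.End.hasEigenvalue_of_hasEigenvector
        ⟨Module.End.mem_eigenspace_iff.mpr hgw, hw0⟩)
  have hSv : S.mulVec (w : Fin m → ℂ) = lam • (w : Fin m → ℂ) := by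
    have hmem : f (w : Fin m → ℂ) = lam • (w : Fin m → ℂ) :=
      Module.End.mem_eigenspace_iff.mp w.2
    rw [← Matrix.toLinAlgEquiv'_apply, ← hfdef]
    exact hmem
  have hSv' : S.mulVec (w : Fin m → ℂ) = filterBeta ω μ • (w : Fin m → ℂ) :=
    filteredPropagator_mulVec ω A hAv
  have heq : filterBeta ω μ = lam := by
    have h0 : (lam - filterBeta ω μ) • (w : Fin m → ℂ) = 0 := by
      rw [sub_smul, ← hSv, hSv', sub_self]
    rcases smul_eq_zero.mp h0 with h | h
    · exact (sub_eq_zero.mp h).symm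
    · exact absurd h hw0
  exact ⟨μ, hμspec, heq⟩
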